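/- Let X be a string over an alphabet Σ, let 0 ≤ c̄ < c ≤ |X|, W = X[c̄..c), and let g be an integer with 0 < g ≤ |W| that is a period of W. Then g is a period of X if and only if X[0..c̄) = X[g..c̄+g) and X[c..|X|) = X[c−g..|X|−g); equivalently, g is a period of X if and only if the maximal backward extension ū = max{d : d ≤ c̄ and X[c̄−d..c̄) = X[c̄+g−d..c̄+g)} equals c̄ and the maximal forward extension u = max{d : c + d ≤ |X| and X[c..c+d) = X[c−g..c−g+d)} equals |X| − c. -/
import Mathlib


namespace IPM

/-- A positive integer `g ≤ |S|` is a period of `S` if `S[t] = S[t+g]` for every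
`t ∈ [0..|S|−g)`. -/
def IsPeriod {β : Type} (S : List β) (g : ℕ) : Prop :=
  0 < g ∧ g ≤ S.length ∧ ∀ t, t + g < S.length → S[t]? = S[t + g]?

/-- `W` occurs in `S` at position `p`, i.e. `S[p..p+|W|) = W`. -/
def OccursAt {β : Type} (W S : List β) (p : ℕ) : Prop :=
  p + W.length ≤ S.length ∧ (S.drop p).take W.length = W

/-- Pointwise characterization of equality of two slices. -/
lemma slice_eq_iff {β : Type} (X : List β) (a b n : ℕ) :
    (X.drop a).take n = (X.drop b).take n ↔ ∀ i < n, X[a + i]? = X[b + i]? := by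
  constructor
  · intro h i hi
    have := congrArg (fun l => l[i]?) h
    simpa [List.getElem?_take, List.getElem?_drop, hi] using this
  · intro h
    apply List.ext_getElem?
    intro i
    by_cases hi : i < n
    · simp [List.getElem?_take, List.getElem?_drop, hi, h i hi]
    · simp [List.getElem?_take, hi]

/-- Let `W = X[c̄..c)` with `0 ≤ c̄ < c ≤ |X|` and let `g` with
`0 < g ≤ |W|` be a period of `W`. Then `g` is a period of `X` iff
`X[0..c̄) = X[g..c̄+g)` and `X[c..|X|) = X[c−g..|X|−g)`; equivalently, `g` is a
period of `X` iff the maximal backward extension `ū` equals `c̄` and the maximal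
forward extension `u` equals `|X| − c`. -/
theorem period_extends_iff {β : Type} (X : List β)
    (cb c : ℕ) (hcb : cb < c) (hc : c ≤ X.length)
    (W : List β) (hW : W = (X.drop cb).take (c - cb))
    (g : ℕ) (hgW : IsPeriod W g)
    (ub : ℕ) (hub : IsGreatest {d : ℕ | d ≤ cb ∧
      (X.drop (cb - d)).take d = (X.drop (cb + g - d)).take d} ub)
    (u : ℕ) (hu : IsGreatest {d : ℕ | c + d ≤ X.length ∧
      (X.drop c).take d = (X.drop (c - g)).take d} u) :
    (IsPeriod X g ↔
      (X.take cb = (X.drop g).take cb ∧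
        X.drop c = (X.drop (c - g)).take (X.length - c))) ∧
    (IsPeriod X g ↔ (ub = cb ∧ u = X.length - c)) := by
  obtain ⟨hg0, hgWlen, hWper⟩ := hgW
  have hWlen : W.length = c - cb := by
    simp [hW, List.length_take, List.length_drop]
    omega
  have hgcb : g ≤ c - cb := hWlen ▸ hgWlen
  -- period of W gives equality on the middle range
  have hmid : ∀ t, cb ≤ t → t + g < c → X[t]? = X[t + g]? := by
    intro t h1 h2
    have hlt : (t - cb) + g < W.length := by omega
    have := hWper (t - cb) hlt
    have e1 : W[t - cb]? = X[t]? := by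
      rw [hW]
      have : t - cb < c - cb := by omega
      simp [List.getElem?_take, List.getElem?_drop, this]
      congr 1; omega
    have e2 : W[t - cb + g]? = X[t + g]? := by
      rw [hW]
      have h3 : t - cb + g < c - cb := by omega
      simp [List.getElem?_take, List.getElem?_drop, h3]
      congr 1; omega
    rw [e1, e2] at this
    exact this
  -- rewrite the two conditions pointwise
  have cond1 : (X.take cb = (X.drop g).take cb) ↔ ∀ i < cb, X[i]? = X[g + i]? := by
    have := slice_eq_iff X 0 g cb
    simpa using this
  have cond2 : (X.drop c = (X.drop (c - g)).take (X.length - c)) ↔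
      ∀ i < X.length - c, X[c + i]? = X[c - g + i]? := by
    have hdc : X.drop c = (X.drop c).take (X.length - c) := by
      rw [List.take_of_length_le]
      simp
    rw [hdc]
    exact slice_eq_iff X c (c - g) (X.length - c)
  have main : IsPeriod X g ↔
      (X.take cb = (X.drop g).take cb ∧
        X.drop c = (X.drop (c - g)).take (X.length - c)) := by
    rw [cond1, cond2]
    constructor
    · rintro ⟨-, -, hper⟩
      constructor
      · intro i hi
        have := hper i (by omega)
        rwa [Nat.add_comm i g] at this
      · intro i hi
        have := hper (c - g + i) (by omega)
        have e : c - g + i + g = c + i := by omega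
        rw [e] at this
        exact this.symm
    · rintro ⟨h1, h2⟩
      refine ⟨hg0, by omega, ?_⟩
      intro t ht
      rcases lt_or_ge t cb with h | h
      · have := h1 t h
        rwa [Nat.add_comm g t] at this
      · rcases lt_or_ge (t + g) c with h' | h'
        · exact hmid t h h'
        · have hi : t - (c - g) < X.length - c := by omega
          have := h2 (t - (c - g)) hi
          have e1 : c + (t - (c - g)) = t + g := by omega
          have e2 : c - g + (t - (c - g)) = t := by omega
          rw [e1, e2] at this
          exact this.symm
  refine ⟨main, main.trans ?_⟩
  constructor
  · rintro ⟨h1, h2⟩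
    constructor
    · have hmem : cb ∈ {d : ℕ | d ≤ cb ∧
          (X.drop (cb - d)).take d = (X.drop (cb + g - d)).take d} := by
        refine ⟨le_refl _, ?_⟩
        have e1 : cb - cb = 0 := by omega
        have e2 : cb + g - cb = g := by omega
        rw [e1, e2, List.drop_zero]
        exact h1
      exact le_antisymm hub.1.1 (hub.2 hmem)
    · have hmem : (X.length - c) ∈ {d : ℕ | c + d ≤ X.length ∧
          (X.drop c).take d = (X.drop (c - g)).take d} := by
        refine ⟨by omega, ?_⟩
        rw [← h2]
        rw [List.take_of_length_le]
        simp
      have hle : u ≤ X.length - c := by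
        have := hu.1.1
        omega
      exact le_antisymm hle (hu.2 hmem)
  · rintro ⟨h1, h2⟩
    have m1 := hub.1
    rw [h1] at m1
    have m2 := hu.1
    rw [h2] at m2
    constructor
    · have := m1.2
      have e1 : cb - cb = 0 := by omega
      have e2 : cb + g - cb = g := by omega
      rw [e1, e2, List.drop_zero] at this
      exact this
    · have := m2.2
      rw [List.take_of_length_le (l := X.drop c) (by simp)] at this
      exact this

end IPM
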